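/- Fix reals c and λ, and let X, Y, Z be reals with X+c > 0, Y+c > 0, Z+c > 0, X ≠ Y and X ≠ Z. Define G₂(U|V) := 4λ²/(√(U+c)·√(V+c)·(√(U+c)+√(V+c))²) and, for U ≠ V, H(U,V|S) := 16λ²·(∂/∂V)[(G₂(U|S)−G₂(V|S))/(U−V)]. Then H(X,Y|Z) + H(X,Z|Y) + 2·G₂(X|Y)·G₂(X|Z) = 32λ⁴/((X+c)·(Y+c)^{3/2}·(Z+c)^{3/2}). -/

import Mathlib

/-- Factorisation of the inhomogeneity of the `(1+1+1)`-point Schwinger–Dyson equation: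
with `G₂(U|V) = 4λ²/(√(U+c)√(V+c)(√(U+c)+√(V+c))²)` and
`H(U,V|S) = 16λ²·∂_V[(G₂(U|S)−G₂(V|S))/(U−V)]`, one has
`H(X,Y|Z) + H(X,Z|Y) + 2G₂(X|Y)G₂(X|Z) = 32λ⁴/((X+c)(Y+c)^{3/2}(Z+c)^{3/2})`. -/
lemma aux_deriv (c lam X S Y K : ℝ) (hY : 0 < Y + c) (hS : 0 < S + c) (hXY : X ≠ Y) :
    deriv (fun v => (K - 4 * lam ^ 2 /
        (Real.sqrt (v + c) * Real.sqrt (S + c) * (Real.sqrt (v + c) + Real.sqrt (S + c)) ^ 2))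
        / (X - v)) Y
    = (2 * lam ^ 2 * (3 * Real.sqrt (Y + c) + Real.sqrt (S + c)) * (X - Y) /
        (Real.sqrt (S + c) * Real.sqrt (Y + c) ^ 3 * (Real.sqrt (Y + c) + Real.sqrt (S + c)) ^ 3)
        + K - 4 * lam ^ 2 /
          (Real.sqrt (Y + c) * Real.sqrt (S + c) * (Real.sqrt (Y + c) + Real.sqrt (S + c)) ^ 2))
      / (X - Y) ^ 2 := by
  set b := Real.sqrt (Y + c) with hb
  set e := Real.sqrt (S + c) with he
  have hbpos : 0 < b := Real.sqrt_pos.mpr hY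
  have hepos : 0 < e := Real.sqrt_pos.mpr hS
  have hbe : 0 < b + e := by positivity
  have hs : HasDerivAt (fun v => Real.sqrt (v + c)) (1 / (2 * b) * 1) Y := by
    exact (Real.hasDerivAt_sqrt hY.ne').comp Y ((hasDerivAt_id Y).add_const c)
  have hD : HasDerivAt (fun v => Real.sqrt (v + c) * e * (Real.sqrt (v + c) + e) ^ 2)
      ((1 / (2 * b) * 1 * e) * (b + e) ^ 2 +
        (b * e) * (2 * (b + e) ^ 1 * (1 / (2 * b) * 1))) Y := by
    exact (hs.mul_const e).mul ((hs.add_const e).pow 2)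
  have hDne : b * e * (b + e) ^ 2 ≠ 0 := by positivity
  have hg : HasDerivAt (fun v => K - 4 * lam ^ 2 /
      (Real.sqrt (v + c) * Real.sqrt (S + c) * (Real.sqrt (v + c) + Real.sqrt (S + c)) ^ 2))
      (-((0 * (b * e * (b + e) ^ 2) - 4 * lam ^ 2 *
        ((1 / (2 * b) * 1 * e) * (b + e) ^ 2 + (b * e) * (2 * (b + e) ^ 1 * (1 / (2 * b) * 1))))
        / (b * e * (b + e) ^ 2) ^ 2)) Y := by
    exact HasDerivAt.const_sub K (((hasDerivAt_const Y (4 * lam ^ 2)).div hD hDne))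
  have hden : HasDerivAt (fun v : ℝ => X - v) (0 - 1) Y :=
    (hasDerivAt_const Y X).sub (hasDerivAt_id Y)
  have hXYne : X - Y ≠ 0 := sub_ne_zero.mpr hXY
  have hf := hg.div hden hXYne
  have hf' : HasDerivAt (fun v => (K - 4 * lam ^ 2 /
      (Real.sqrt (v + c) * e * (Real.sqrt (v + c) + e) ^ 2)) / (X - v)) _ Y := hf
  rw [hf'.deriv]
  have hbne := hbpos.ne'
  have hene := hepos.ne'
  have hbene := hbe.ne'
  field_simp
  ring

theorem stmt_8 (c lam X Y Z : ℝ) (hX : 0 < X + c) (hY : 0 < Y + c) (hZ : 0 < Z + c)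
    (hXY : X ≠ Y) (hXZ : X ≠ Z)
    (G₂ : ℝ → ℝ → ℝ)
    (hG₂ : ∀ U V, G₂ U V = 4 * lam ^ 2 /
      (Real.sqrt (U + c) * Real.sqrt (V + c) * (Real.sqrt (U + c) + Real.sqrt (V + c)) ^ 2))
    (H : ℝ → ℝ → ℝ → ℝ)
    (hH : ∀ U V S, U ≠ V →
      H U V S = 16 * lam ^ 2 * deriv (fun V' => (G₂ U S - G₂ V' S) / (U - V')) V) :
    H X Y Z + H X Z Y + 2 * G₂ X Y * G₂ X Z =
      32 * lam ^ 4 / ((X + c) * Real.sqrt (Y + c) ^ 3 * Real.sqrt (Z + c) ^ 3) := by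
  rw [hH X Y Z hXY, hH X Z Y hXZ]
  simp only [hG₂]
  rw [aux_deriv c lam X Z Y _ hY hZ hXY, aux_deriv c lam X Y Z _ hZ hY hXZ]
  set a := Real.sqrt (X + c) with ha
  set b := Real.sqrt (Y + c) with hb
  set d := Real.sqrt (Z + c) with hd
  have hapos : 0 < a := Real.sqrt_pos.mpr hX
  have hbpos : 0 < b := Real.sqrt_pos.mpr hY
  have hdpos : 0 < d := Real.sqrt_pos.mpr hZ
  have ha2 : a ^ 2 = X + c := Real.sq_sqrt hX.le
  have hb2 : b ^ 2 = Y + c := Real.sq_sqrt hY.le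
  have hd2 : d ^ 2 = Z + c := Real.sq_sqrt hZ.le
  have hxy : X - Y = a ^ 2 - b ^ 2 := by rw [ha2, hb2]; ring
  have hxz : X - Z = a ^ 2 - d ^ 2 := by rw [ha2, hd2]; ring
  have hxyne : a ^ 2 - b ^ 2 ≠ 0 := by rw [← hxy]; exact sub_ne_zero.mpr hXY
  have hxzne : a ^ 2 - d ^ 2 ≠ 0 := by rw [← hxz]; exact sub_ne_zero.mpr hXZ
  rw [hxy, hxz, ← ha2]
  have h1 : a + b ≠ 0 := by positivity
  have h2 : a + d ≠ 0 := by positivity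
  have h3 : b + d ≠ 0 := by positivity
  field_simp
  ring
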